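/- Let P be a real polynomial of degree n (n ≥ 2) with all zeros real and simple, and let y_1 < ⋯ < y_{n+1} be reals, none a zero of P, such that P(y_k)·P(y_{k+1}) < 0 for all k ≠ k₀ (for some fixed k₀ ∈ {1,…,n}) and P(y_{k₀})·P(y_{k₀+1}) > 0, and suppose P(y_{n+1}) and the leading coefficient of P have the same sign. Then P has exactly one zero in each interval (y_k, y_{k+1}) for k ≠ k₀, either zero or two zeros in (y_{k₀}, y_{k₀+1}), and the total number of zeros of P in (y_1, y_{n+1}) is n − 1 or n; in particular at most one zero of P lies outside [y_1, y_{n+1}]. -/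

import Mathlib

open Polynomial

lemma aux_prod_neg_iff (M : Multiset ℝ) (h : ∀ x ∈ M, x ≠ 0) :
    M.prod < 0 ↔ Odd (M.filter (fun x => x < 0)).card := by
  induction M using Multiset.induction_on with
  | empty => simp
  | cons a M ih =>
    have ha : a ≠ 0 := h a (Multiset.mem_cons_self a M)
    have hM : ∀ x ∈ M, x ≠ 0 := fun x hx => h x (Multiset.mem_cons_of_mem hx)
    have hprod : M.prod ≠ 0 := Multiset.prod_ne_zero (fun h0 => hM 0 h0 rfl)
    have h0 : 0 < M.prod ↔ ¬ M.prod < 0 :=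
      ⟨fun h => asymm h, fun h => hprod.lt_or_gt.resolve_left h⟩
    rcases ha.lt_or_gt with h1 | h1
    · rw [Multiset.filter_cons_of_pos (p := fun x => x < 0) M h1, Multiset.card_cons, Nat.odd_add_one,
        Multiset.prod_cons, mul_neg_iff]
      constructor
      · rintro (⟨h2, _⟩ | ⟨_, h3⟩)
        · exact absurd h2 (asymm h1)
        · exact fun hodd => absurd ((ih hM).mpr hodd) (asymm h3)
      · intro hne
        exact Or.inr ⟨h1, h0.mpr (fun hlt => hne ((ih hM).mp hlt))⟩
    · rw [Multiset.filter_cons_of_neg (p := fun x => x < 0) M (by exact asymm h1 : ¬ a < 0),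
        Multiset.prod_cons, mul_neg_iff, ih hM]
      constructor
      · rintro (⟨_, h3⟩ | ⟨h2, _⟩)
        · exact h3
        · exact absurd h1 (asymm h2)
      · exact fun hodd => Or.inl ⟨h1, hodd⟩

lemma aux_count (P : Polynomial ℝ) (hP : P.roots.card = P.natDegree) (hnd : P.roots.Nodup)
    (a b : ℝ) (hab : a < b) (ha : P.eval a ≠ 0) (hb : P.eval b ≠ 0) :
    (P.eval a * P.eval b < 0 ↔
      Odd ((P.roots.toFinset.filter (fun r => a < r ∧ r < b)).card)) ∧
    (0 < P.eval a * P.eval b ↔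
      Even ((P.roots.toFinset.filter (fun r => a < r ∧ r < b)).card)) := by
  have hP0 : P ≠ 0 := fun h => ha (by simp [h])
  have key := (Polynomial.C_leadingCoeff_mul_prod_multiset_X_sub_C hP).symm
  have heval : ∀ x : ℝ, P.eval x = P.leadingCoeff * (P.roots.map fun r => x - r).prod := by
    intro x
    conv_lhs => rw [key]
    simp [Polynomial.eval_multiset_prod, Multiset.map_map, Function.comp]
  have hc : P.leadingCoeff ≠ 0 := Polynomial.leadingCoeff_ne_zero.mpr hP0
  have hform : P.eval a * P.eval b
      = P.leadingCoeff ^ 2 * (P.roots.map fun r => (a - r) * (b - r)).prod := by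
    rw [heval a, heval b, Multiset.prod_map_mul]; ring
  have hroot_ne : ∀ r ∈ P.roots, r ≠ a ∧ r ≠ b := by
    intro r hr
    have hz : P.eval r = 0 := Polynomial.isRoot_of_mem_roots hr
    constructor <;> rintro rfl
    · exact ha hz
    · exact hb hz
  have hfacne : ∀ x ∈ (P.roots.map fun r => (a - r) * (b - r)), x ≠ 0 := by
    intro x hx
    obtain ⟨r, hr, rfl⟩ := Multiset.mem_map.mp hx
    obtain ⟨h1, h2⟩ := hroot_ne r hr
    exact mul_ne_zero (sub_ne_zero.mpr (Ne.symm h1)) (sub_ne_zero.mpr (Ne.symm h2))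
  -- card of multiset filter equals card of finset filter
  have hcardeq : ∀ (p : ℝ → Prop) [DecidablePred p],
      (P.roots.toFinset.filter p).card = (P.roots.filter p).card := by
    intro p _
    rw [← Multiset.toFinset_filter]
    exact Multiset.toFinset_card_eq_card_iff_nodup.mpr (hnd.filter p) ▸ rfl
  have hmain : P.eval a * P.eval b < 0 ↔
      Odd ((P.roots.toFinset.filter (fun r => a < r ∧ r < b)).card) := by
    rw [hcardeq, hform]
    have hsq : 0 < P.leadingCoeff ^ 2 := by positivity
    have hiff : P.leadingCoeff ^ 2 * (P.roots.map fun r => (a - r) * (b - r)).prod < 0 ↔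
        (P.roots.map fun r => (a - r) * (b - r)).prod < 0 := by
      constructor <;> intro h <;> nlinarith
    rw [hiff, aux_prod_neg_iff _ hfacne, Multiset.filter_map]
    rw [Multiset.card_map]
    congr! 2
    apply Multiset.filter_congr
    intro r hr
    obtain ⟨h1, h2⟩ := hroot_ne r hr
    simp only [Function.comp]
    constructor
    · intro h
      rcases mul_neg_iff.mp h with ⟨hh1, hh2⟩ | ⟨hh1, hh2⟩
      · constructor <;> linarith
      · constructor <;> linarith
    · rintro ⟨hh1, hh2⟩
      apply mul_neg_of_neg_of_pos <;> linarith
  refine ⟨hmain, ?_⟩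
  have hne : P.eval a * P.eval b ≠ 0 := mul_ne_zero ha hb
  rw [← Nat.not_odd_iff_even, ← hmain]
  exact ⟨fun h => asymm h, fun h => hne.lt_or_gt.resolve_left h⟩

theorem stmt_16 (n : ℕ) (hn : 2 ≤ n) (P : Polynomial ℝ)
    (hdeg : P.natDegree = n) (hroots : P.roots.card = n) (hsimple : P.roots.Nodup)
    (y : Fin (n + 1) → ℝ) (hy : StrictMono y)
    (hPy : ∀ j : Fin (n + 1), P.eval (y j) ≠ 0)
    (k₀ : Fin n)
    (hsign : ∀ k : Fin n, k ≠ k₀ → P.eval (y k.castSucc) * P.eval (y k.succ) < 0)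
    (hk₀ : 0 < P.eval (y k₀.castSucc) * P.eval (y k₀.succ))
    (hlead : 0 < P.eval (y (Fin.last n)) * P.leadingCoeff) :
    (∀ k : Fin n, k ≠ k₀ →
        (P.roots.toFinset.filter
          (fun z => y k.castSucc < z ∧ z < y k.succ)).card = 1) ∧
    ((P.roots.toFinset.filter
        (fun z => y k₀.castSucc < z ∧ z < y k₀.succ)).card = 0 ∨
      (P.roots.toFinset.filter
        (fun z => y k₀.castSucc < z ∧ z < y k₀.succ)).card = 2) ∧
    ((P.roots.toFinset.filter
        (fun z => y 0 < z ∧ z < y (Fin.last n))).card = n - 1 ∨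
      (P.roots.toFinset.filter
        (fun z => y 0 < z ∧ z < y (Fin.last n))).card = n) ∧
    (P.roots.toFinset.filter
        (fun z => ¬(y 0 ≤ z ∧ z ≤ y (Fin.last n)))).card ≤ 1 := by
  have hPcard : P.roots.card = P.natDegree := by rw [hroots, hdeg]
  set S := P.roots.toFinset with hS
  have hScard : S.card = n := by
    rw [hS, Multiset.toFinset_card_eq_card_iff_nodup.mpr hsimple, hroots]
  set g : Fin n → Finset ℝ :=
    fun k => S.filter (fun z => y k.castSucc < z ∧ z < y k.succ) with hg
  set f : Fin n → ℕ := fun k => (g k).card with hf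
  -- interval endpoints ordering
  have hlt : ∀ k : Fin n, y k.castSucc < y k.succ :=
    fun k => hy (Fin.castSucc_lt_succ (i := k))
  -- parity facts
  have hodd : ∀ k : Fin n, k ≠ k₀ → Odd (f k) := by
    intro k hk
    exact ((aux_count P hPcard hsimple _ _ (hlt k) (hPy _) (hPy _)).1).mp (hsign k hk)
  have heven : Even (f k₀) :=
    ((aux_count P hPcard hsimple _ _ (hlt k₀) (hPy _) (hPy _)).2).mp hk₀
  -- disjointness
  have hdisj0 : ∀ k l : Fin n, k < l → Disjoint (g k) (g l) := by
    intro k l hkl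
    rw [Finset.disjoint_left]
    rintro z hzk hzl
    simp only [hg, Finset.mem_filter] at hzk hzl
    have hle : y k.succ ≤ y l.castSucc := by
      apply hy.monotone
      simp only [Fin.le_def, Fin.val_succ, Fin.coe_castSucc]
      exact hkl
    linarith [hzk.2.2, hzl.2.1]
  have hdisj : ∀ k ∈ Finset.univ, ∀ l ∈ (Finset.univ : Finset (Fin n)), k ≠ l →
      Disjoint (g k) (g l) := by
    intro k _ l _ hkl
    rcases hkl.lt_or_gt with h | h
    · exact hdisj0 k l h
    · exact (hdisj0 l k h).symm
  have hbUcard : (Finset.univ.biUnion g).card = ∑ k, f k := Finset.card_biUnion hdisj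
  have hsub : Finset.univ.biUnion g ⊆ S :=
    Finset.biUnion_subset.mpr (fun k _ => Finset.filter_subset _ _)
  have hsum_le : ∑ k, f k ≤ n := by
    have h := Finset.card_le_card hsub
    rw [hbUcard, hScard] at h
    exact h
  -- arithmetic on the sum
  set E := Finset.univ.erase k₀ with hE
  have hEcard : E.card = n - 1 := by
    rw [hE, Finset.card_erase_of_mem (Finset.mem_univ _)]
    simp
  have hsplit : ∑ k ∈ E, f k + f k₀ = ∑ k, f k :=
    Finset.sum_erase_add _ _ (Finset.mem_univ k₀)
  have h1each : ∀ k ∈ E, 1 ≤ f k := by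
    intro k hk
    obtain ⟨m, hm⟩ := hodd k (Finset.ne_of_mem_erase hk)
    omega
  have hEge : n - 1 ≤ ∑ k ∈ E, f k := by
    calc n - 1 = E.card • 1 := by rw [hEcard, smul_eq_mul, mul_one]
    _ ≤ ∑ k ∈ E, f k := Finset.card_nsmul_le_sum E f 1 h1each
  have hk0zero : f k₀ = 0 := by
    obtain ⟨m, hm⟩ := heven
    omega
  have hone : ∀ k : Fin n, k ≠ k₀ → f k = 1 := by
    intro j hj
    have hjE : j ∈ E := Finset.mem_erase.mpr ⟨hj, Finset.mem_univ j⟩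
    have hsplit2 : ∑ k ∈ E.erase j, f k + f j = ∑ k ∈ E, f k :=
      Finset.sum_erase_add _ _ hjE
    have hEEcard : (E.erase j).card = n - 2 := by
      rw [Finset.card_erase_of_mem hjE, hEcard]
      omega
    have hEEge : n - 2 ≤ ∑ k ∈ E.erase j, f k := by
      calc n - 2 = (E.erase j).card • 1 := by rw [hEEcard, smul_eq_mul, mul_one]
      _ ≤ ∑ k ∈ E.erase j, f k :=
        Finset.card_nsmul_le_sum _ f 1 (fun k hk => h1each k (Finset.mem_of_mem_erase hk))
    obtain ⟨m, hm⟩ := hodd j hj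
    omega
  have hsumE : ∑ k ∈ E, f k = n - 1 := by
    have : ∑ k ∈ E, f k = ∑ k ∈ E, 1 :=
      Finset.sum_congr rfl (fun k hk => hone k (Finset.ne_of_mem_erase hk))
    rw [this, Finset.sum_const, smul_eq_mul, mul_one, hEcard]
  -- covering lemma
  have hzne : ∀ z ∈ S, ∀ j, z ≠ y j := by
    intro z hz j hj
    have hz0 : P.eval z = 0 := Polynomial.isRoot_of_mem_roots (Multiset.mem_toFinset.mp hz)
    exact hPy j (hj ▸ hz0)
  have hcover : ∀ z ∈ S, y 0 < z → z < y (Fin.last n) →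
      ∃ k : Fin n, y k.castSucc < z ∧ z < y k.succ := by
    intro z hz h0 hlast
    set A : Finset (Fin (n + 1)) := Finset.univ.filter (fun j => y j < z) with hA
    have hAne : A.Nonempty := ⟨0, by simp [hA, h0]⟩
    set m := A.max' hAne with hm
    have hmz : y m < z := by
      have := A.max'_mem hAne
      simpa [hA] using this
    have hmlast : m ≠ Fin.last n := by
      rintro h
      rw [h] at hmz
      linarith
    have hmlt : (m : ℕ) < n := Fin.val_lt_last hmlast
    refine ⟨⟨(m : ℕ), hmlt⟩, ?_, ?_⟩
    · have hcs : (Fin.castSucc ⟨(m : ℕ), hmlt⟩) = m := by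
        ext
        simp
      rw [hcs]
      exact hmz
    · by_contra hcon
      push_neg at hcon
      have hlt2 : y (Fin.succ ⟨(m : ℕ), hmlt⟩) < z :=
        lt_of_le_of_ne hcon (Ne.symm (hzne z hz _))
      have hmem : Fin.succ ⟨(m : ℕ), hmlt⟩ ∈ A := by
        simp only [hA, Finset.mem_filter, Finset.mem_univ, true_and]
        exact hlt2
      have hle := A.le_max' _ hmem
      rw [← hm] at hle
      simp only [Fin.le_def, Fin.val_succ] at hle
      omega
  have hTeq : S.filter (fun z => y 0 < z ∧ z < y (Fin.last n)) = Finset.univ.biUnion g := by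
    ext z
    simp only [Finset.mem_filter, Finset.mem_biUnion, Finset.mem_univ, true_and, hg]
    constructor
    · rintro ⟨hz, h0, hl⟩
      obtain ⟨k, hk1, hk2⟩ := hcover z hz h0 hl
      exact ⟨k, hz, hk1, hk2⟩
    · rintro ⟨k, hz, hk1, hk2⟩
      refine ⟨hz, ?_, ?_⟩
      · exact lt_of_le_of_lt (hy.monotone (Fin.zero_le _)) hk1
      · exact lt_of_lt_of_le hk2 (hy.monotone (Fin.le_last _))
  have hTcard : (S.filter (fun z => y 0 < z ∧ z < y (Fin.last n))).card = n - 1 := by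
    rw [hTeq, hbUcard, ← hsplit, hsumE, hk0zero]
    omega
  refine ⟨hone, Or.inl hk0zero, Or.inl hTcard, ?_⟩
  have hUeq : S.filter (fun z => y 0 ≤ z ∧ z ≤ y (Fin.last n))
      = S.filter (fun z => y 0 < z ∧ z < y (Fin.last n)) := by
    apply Finset.filter_congr
    intro z hz
    have h0 : z ≠ y 0 := hzne z hz 0
    have hl : z ≠ y (Fin.last n) := hzne z hz _
    constructor
    · rintro ⟨h1, h2⟩
      exact ⟨lt_of_le_of_ne h1 (Ne.symm h0), lt_of_le_of_ne h2 hl⟩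
    · rintro ⟨h1, h2⟩
      exact ⟨h1.le, h2.le⟩
  have htotal := Finset.card_filter_add_card_filter_not
    (s := S) (p := fun z => y 0 ≤ z ∧ z ≤ y (Fin.last n))
  rw [hUeq, hTcard, hScard] at htotal
  omega
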